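/- For every integer n ≥ 1 and every real μ > 0, the integral over ℂ^{n+1} ≅ ℝ^{2n+2} with respect to Lebesgue measure of the function (z,w) ↦ μ^n · ∏_{h=1}^n (1+|z_h|²)^{μ(n+1)−2} / ( ∏_{h=1}^n (1+|z_h|²)^μ + |w|² )^{n+2} equals π^{n+1} μ^n / (n+1). -/

import Mathlib

open MeasureTheory Real Set Filter Topology

lemma aux_radial {a s : ℝ} (ha : 0 < a) (hs : 1 < s) :
    ∫ y in Ioi (0:ℝ), y * (a + y ^ 2) ^ (-s) = a ^ (1 - s) / (2 * (s - 1)) := by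
  have hs0 : (1:ℝ) - s ≠ 0 := sub_ne_zero.mpr (by linarith)
  have key : ∀ x ∈ Ici (0:ℝ), HasDerivAt (fun y : ℝ => (a + y ^ 2) ^ (1 - s) / (2 * (1 - s)))
      (x * (a + x ^ 2) ^ (-s)) x := by
    intro x _
    have hpos : 0 < a + x ^ 2 := by positivity
    have h1 : HasDerivAt (fun y : ℝ => a + y ^ 2) (2 * x) x := by
      simpa using ((hasDerivAt_pow 2 x).const_add a)
    have h3 := (h1.rpow_const (p := 1 - s) (Or.inl hpos.ne')).div_const (2 * (1 - s))
    refine h3.congr_deriv ?_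
    rw [show (1:ℝ) - s - 1 = -s by ring]
    field_simp
  have htend : Tendsto (fun y : ℝ => (a + y ^ 2) ^ (1 - s) / (2 * (1 - s))) atTop (𝓝 0) := by
    rw [show (0:ℝ) = 0 / (2 * (1 - s)) by simp]
    apply Tendsto.div_const
    have h1 : Tendsto (fun y : ℝ => a + y ^ 2) atTop atTop :=
      tendsto_atTop_add_const_left _ _ (tendsto_pow_atTop two_ne_zero)
    have h2 : Tendsto (fun x : ℝ => x ^ (1 - s)) atTop (𝓝 0) := by
      simpa using tendsto_rpow_neg_atTop (by linarith : (0:ℝ) < s - 1)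
    exact h2.comp h1
  have := integral_Ioi_of_hasDerivAt_of_nonneg' key
    (fun x hx => mul_nonneg (le_of_lt hx) (rpow_nonneg (by positivity) _)) htend
  rw [this, zero_sub, show (0:ℝ)^2 = 0 by ring, add_zero,
    show 2*(1-s) = -(2*(s-1)) by ring, div_neg, neg_neg]

lemma aux_radial_integrable {a s : ℝ} (ha : 0 < a) (hs : 1 < s) :
    IntegrableOn (fun y : ℝ => y * (a + y ^ 2) ^ (-s)) (Ioi 0) := by
  have hs0 : (1:ℝ) - s ≠ 0 := sub_ne_zero.mpr (by linarith)
  have key : ∀ x ∈ Ici (0:ℝ), HasDerivAt (fun y : ℝ => (a + y ^ 2) ^ (1 - s) / (2 * (1 - s)))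
      (x * (a + x ^ 2) ^ (-s)) x := by
    intro x _
    have hpos : 0 < a + x ^ 2 := by positivity
    have h1 : HasDerivAt (fun y : ℝ => a + y ^ 2) (2 * x) x := by
      simpa using ((hasDerivAt_pow 2 x).const_add a)
    have h3 := (h1.rpow_const (p := 1 - s) (Or.inl hpos.ne')).div_const (2 * (1 - s))
    refine h3.congr_deriv ?_
    rw [show (1:ℝ) - s - 1 = -s by ring]
    field_simp
  have htend : Tendsto (fun y : ℝ => (a + y ^ 2) ^ (1 - s) / (2 * (1 - s))) atTop (𝓝 0) := by
    rw [show (0:ℝ) = 0 / (2 * (1 - s)) by simp]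
    apply Tendsto.div_const
    have h1 : Tendsto (fun y : ℝ => a + y ^ 2) atTop atTop :=
      tendsto_atTop_add_const_left _ _ (tendsto_pow_atTop two_ne_zero)
    have h2 : Tendsto (fun x : ℝ => x ^ (1 - s)) atTop (𝓝 0) := by
      simpa using tendsto_rpow_neg_atTop (by linarith : (0:ℝ) < s - 1)
    exact h2.comp h1
  exact integrableOn_Ioi_deriv_of_nonneg' key
    (fun x hx => mul_nonneg (le_of_lt hx) (rpow_nonneg (by positivity) _)) htend

lemma aux_complex_integral {a s : ℝ} (ha : 0 < a) (hs : 1 < s) :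
    ∫ w : ℂ, (a + ‖w‖ ^ 2) ^ (-s) = π * a ^ (1 - s) / (s - 1) := by
  have h := MeasureTheory.integral_fun_norm_addHaar (volume : Measure ℂ)
      (fun y : ℝ => (a + y ^ 2) ^ (-s))
  have hv : ((volume : Measure ℂ) (Metric.ball 0 1)).toReal = π := by
    rw [Complex.volume_ball]
    simp [ENNReal.toReal_mul]
  simp only [Complex.finrank_real_complex, smul_eq_mul, nsmul_eq_mul, measureReal_def, hv,
    show (2-1 : ℕ) = 1 from rfl, pow_one] at h
  rw [h, aux_radial ha hs]
  have : s - 1 ≠ 0 := sub_ne_zero.mpr (by linarith)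
  field_simp
  ring

lemma aux_complex_integrable {a s : ℝ} (ha : 0 < a) (hs : 1 < s) :
    Integrable (fun w : ℂ => (a + ‖w‖ ^ 2) ^ (-s)) := by
  have hnr : (Module.finrank ℝ ℂ : ℝ) < 2 * s := by
    rw [Complex.finrank_real_complex]; push_cast; linarith
  have hint := (integrable_rpow_neg_one_add_norm_sq (E := ℂ) (μ := volume) hnr).const_mul
    ((min a 1) ^ (-s))
  refine hint.mono' ?_ ?_
  · apply Continuous.aestronglyMeasurable
    apply Continuous.rpow_const
    · continuity
    · intro x; exact Or.inl (by positivity)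
  · filter_upwards with w
    have h0 : (0:ℝ) < min a 1 := lt_min ha one_pos
    have hb : min a 1 * (1 + ‖w‖ ^ 2) ≤ a + ‖w‖ ^ 2 := by
      have h1 := min_le_left a 1
      have h2 := min_le_right a 1
      nlinarith [sq_nonneg (‖w‖)]
    have hle : (a + ‖w‖ ^ 2) ^ (-s) ≤ (min a 1 * (1 + ‖w‖ ^ 2)) ^ (-s) :=
      rpow_le_rpow_of_nonpos (by positivity) hb (by linarith)
    rw [Real.norm_eq_abs, abs_of_nonneg (rpow_nonneg (by positivity) _)]
    calc (a + ‖w‖ ^ 2) ^ (-s) ≤ (min a 1 * (1 + ‖w‖ ^ 2)) ^ (-s) := hle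
      _ = (min a 1) ^ (-s) * (1 + ‖w‖ ^ 2) ^ (-(2*s)/2) := by
          rw [mul_rpow h0.le (by positivity), show -(2*s)/2 = -s by ring]

theorem stmt_13 (n : ℕ) (hn : 1 ≤ n) (μ : ℝ) (hμ : 0 < μ) :
    ∫ p : (Fin n → ℂ) × ℂ,
        μ ^ n * (∏ h, (1 + ‖p.1 h‖ ^ 2) ^ (μ * (n + 1) - 2)) /
          ((∏ h, (1 + ‖p.1 h‖ ^ 2) ^ μ) + ‖p.2‖ ^ 2) ^ (n + 2) =
      Real.pi ^ (n + 1) * μ ^ n / (n + 1) := by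
  have hs : (1:ℝ) < (n:ℝ) + 2 := by
    have : (0:ℝ) <= (n:ℝ) := Nat.cast_nonneg n
    linarith
  set s : ℝ := (n:ℝ) + 2 with hs_def
  set c : (Fin n → ℂ) → ℝ :=
    fun z => μ ^ n * ∏ h, (1 + ‖z h‖ ^ 2) ^ (μ * ((n:ℝ) + 1) - 2) with hc_def
  set A : (Fin n → ℂ) → ℝ := fun z => ∏ h, (1 + ‖z h‖ ^ 2) ^ μ with hA_def
  have hAz : ∀ z, 0 < A z := fun z =>
    Finset.prod_pos fun h _ => rpow_pos_of_pos (by positivity) _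
  have hcz : ∀ z, 0 ≤ c z := fun z =>
    mul_nonneg (by positivity) (Finset.prod_nonneg fun h _ => rpow_nonneg (by positivity) _)
  set F : (Fin n → ℂ) × ℂ → ℝ :=
    fun p => c p.1 * (A p.1 + ‖p.2‖ ^ 2) ^ (-s) with hF_def
  -- the integrand is F
  have hFeq : ∀ p : (Fin n → ℂ) × ℂ,
      μ ^ n * (∏ h, (1 + ‖p.1 h‖ ^ 2) ^ (μ * (n + 1) - 2)) /
        ((∏ h, (1 + ‖p.1 h‖ ^ 2) ^ μ) + ‖p.2‖ ^ 2) ^ (n + 2) = F p := by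
    intro p
    have hy : 0 < A p.1 + ‖p.2‖ ^ 2 := by
      have := hAz p.1; positivity
    rw [hF_def]
    dsimp only
    rw [← Real.rpow_natCast (A p.1 + ‖p.2‖ ^ 2) (n + 2)]
    rw [Real.rpow_neg hy.le, ← div_eq_mul_inv]
    push_cast
    rfl
  -- inner integral
  have hinner : ∀ z : Fin n → ℂ, ∫ w : ℂ, F (z, w)
      = (Real.pi * μ ^ n / (s - 1)) * ∏ h, (1 + ‖z h‖ ^ 2) ^ (-2 : ℝ) := by
    intro z
    rw [hF_def]
    dsimp only
    rw [MeasureTheory.integral_const_mul, aux_complex_integral (hAz z) hs]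
    have hAr : (A z) ^ ((1:ℝ) - s) = ∏ h, (1 + ‖z h‖ ^ 2) ^ (μ * (1 - s)) := by
      rw [hA_def]
      dsimp only
      rw [← Real.finset_prod_rpow _ _ (fun h _ => rpow_nonneg (by positivity) _) _]
      refine Finset.prod_congr rfl fun h _ => ?_
      rw [← Real.rpow_mul (by positivity)]
    rw [hAr, hc_def]
    dsimp only
    have hprod : (∏ h, (1 + ‖z h‖ ^ 2) ^ (μ * ((n:ℝ) + 1) - 2)) *
        ∏ h, (1 + ‖z h‖ ^ 2) ^ (μ * (1 - s))
        = ∏ h, (1 + ‖z h‖ ^ 2) ^ (-2 : ℝ) := by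
      rw [← Finset.prod_mul_distrib]
      refine Finset.prod_congr rfl fun h _ => ?_
      rw [← Real.rpow_add (by positivity)]
      congr 1
      rw [hs_def]
      ring
    rw [← hprod]
    ring
  -- continuity of F
  have hx : ∀ h : Fin n, Continuous fun z : Fin n → ℂ => 1 + ‖z h‖ ^ 2 :=
    fun h => continuous_const.add ((continuous_norm.comp (continuous_apply h)).pow 2)
  have hcontc : Continuous c := by
    rw [hc_def]
    exact continuous_const.mul (continuous_finset_prod _ fun h _ =>
      (hx h).rpow_const fun z => Or.inl (by positivity))
  have hcontA : Continuous A := by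
    rw [hA_def]
    exact continuous_finset_prod _ fun h _ =>
      (hx h).rpow_const fun z => Or.inl (by positivity)
  have hcont : Continuous F := by
    rw [hF_def]
    exact (hcontc.comp continuous_fst).mul
      (((hcontA.comp continuous_fst).add
        ((continuous_norm.comp continuous_snd).pow 2)).rpow_const
        fun p => Or.inl (by have := hAz p.1; exact (by positivity : (0:ℝ) < A p.1 + ‖p.2‖ ^ 2).ne'))
  have hFnonneg : ∀ p, 0 ≤ F p := fun p =>
    mul_nonneg (hcz p.1) (Real.rpow_nonneg (by have := hAz p.1; positivity) _)
  have hHint : Integrable (fun z : Fin n → ℂ =>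
      (Real.pi * μ ^ n / (s - 1)) * ∏ h, (1 + ‖z h‖ ^ 2) ^ (-2 : ℝ)) := by
    refine Integrable.const_mul ?_ _
    exact MeasureTheory.Integrable.fintype_prod
      (f := fun (_ : Fin n) (w : ℂ) => (1 + ‖w‖ ^ 2) ^ (-2 : ℝ))
      (fun _ => by simpa using aux_complex_integrable one_pos one_lt_two)
  have hFint : Integrable F ((volume : Measure (Fin n → ℂ)).prod (volume : Measure ℂ)) := by
    refine (MeasureTheory.integrable_prod_iff hcont.aestronglyMeasurable).mpr ⟨?_, ?_⟩
    · exact Filter.Eventually.of_forall fun z =>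
        (aux_complex_integrable (hAz z) hs).const_mul (c z)
    · refine hHint.congr (Filter.Eventually.of_forall fun z => ?_)
      dsimp only
      rw [← hinner z]
      exact MeasureTheory.integral_congr_ae (Filter.Eventually.of_forall fun w =>
        (Real.norm_of_nonneg (hFnonneg (z, w))).symm)
  calc ∫ p : (Fin n → ℂ) × ℂ,
        μ ^ n * (∏ h, (1 + ‖p.1 h‖ ^ 2) ^ (μ * (n + 1) - 2)) /
          ((∏ h, (1 + ‖p.1 h‖ ^ 2) ^ μ) + ‖p.2‖ ^ 2) ^ (n + 2)
      = ∫ p : (Fin n → ℂ) × ℂ, F p :=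
        MeasureTheory.integral_congr_ae (Filter.Eventually.of_forall hFeq)
    _ = ∫ z : Fin n → ℂ, ∫ w : ℂ, F (z, w) := by
        rw [MeasureTheory.Measure.volume_eq_prod]
        exact MeasureTheory.integral_prod F hFint
    _ = ∫ z : Fin n → ℂ,
          (Real.pi * μ ^ n / (s - 1)) * ∏ h, (1 + ‖z h‖ ^ 2) ^ (-2 : ℝ) :=
        MeasureTheory.integral_congr_ae (Filter.Eventually.of_forall hinner)
    _ = (Real.pi * μ ^ n / (s - 1)) *
          ∫ z : Fin n → ℂ, ∏ h, (1 + ‖z h‖ ^ 2) ^ (-2 : ℝ) :=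
        MeasureTheory.integral_const_mul _ _
    _ = (Real.pi * μ ^ n / (s - 1)) *
          (∫ w : ℂ, (1 + ‖w‖ ^ 2) ^ (-2 : ℝ)) ^ n := by
        rw [MeasureTheory.volume_pi, MeasureTheory.integral_fintype_prod_eq_pow (ι := Fin n)
          (fun w : ℂ => (1 + ‖w‖ ^ 2) ^ (-2 : ℝ)), Fintype.card_fin]
    _ = (Real.pi * μ ^ n / (s - 1)) * Real.pi ^ n := by
        have h2 := aux_complex_integral (a := 1) (s := 2) one_pos one_lt_two
        simp only [Real.one_rpow] at h2
        norm_num at h2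
        norm_num [h2]
    _ = Real.pi ^ (n + 1) * μ ^ n / (n + 1) := by
        rw [hs_def]
        ring
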